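/- Let n ≥ 1 and 0 < α < n. There exist constants c₁, c₂ > 0 depending only on α and n such that for every ε > 0 there exists a nonnegative bounded measurable function f on ℝ^n with compact support such that, with μ_f the measure f dx: |{x ∈ ℝ^n : ℐ_α(f)(x) > 2 and ℳ_α(f)(x) ≤ ε}| ≥ c₁ e^{−c₂/ε} |{x ∈ ℝ^n : ℐ_α(f)(x) > 1}|, and moreover 0 < |{x : ℐ_α(f)(x) > 1}| < ∞. Here ℐ_α(f) and ℳ_α(f) denote the dyadic Riesz potential and dyadic fractional maximal function of μ_f, and |·| is Lebesgue measure. -/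

import Mathlib

open MeasureTheory Metric Set ENNReal

noncomputable section

/-- The nonlinear potential `T^q_α(μ)(x) = (∫_0^∞ (μ(B(x,r))/r^{n−α})^q dr/r)^{1/q}`. -/
def Tpot (n : ℕ) (α q : ℝ) (μ : Measure (EuclideanSpace ℝ (Fin n)))
    (x : EuclideanSpace ℝ (Fin n)) : ℝ≥0∞ :=
  (∫⁻ r in Set.Ioi (0 : ℝ),
      (μ (Metric.ball x r) / ENNReal.ofReal (r ^ ((n : ℝ) - α))) ^ q
        * ENNReal.ofReal (1 / r)) ^ (1 / q)

/-- The fractional maximal function `M_α(μ)(x) = sup_{r>0} μ(B(x,r))/r^{n−α}`. -/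
def Mfrac (n : ℕ) (α : ℝ) (μ : Measure (EuclideanSpace ℝ (Fin n)))
    (x : EuclideanSpace ℝ (Fin n)) : ℝ≥0∞ :=
  ⨆ (r : ℝ) (_ : 0 < r), μ (Metric.ball x r) / ENNReal.ofReal (r ^ ((n : ℝ) - α))

/-- The closed axis-parallel cube with center `c` and side length `s`. -/
def axisCube (n : ℕ) (c : EuclideanSpace ℝ (Fin n)) (s : ℝ) :
    Set (EuclideanSpace ℝ (Fin n)) :=
  {x | ∀ i, |x i - c i| ≤ s / 2}

/-- The weighted measure `|S|_σ = ∫_S σ dx`. -/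
def wMeasure (n : ℕ) (σ : EuclideanSpace ℝ (Fin n) → ℝ)
    (S : Set (EuclideanSpace ℝ (Fin n))) : ℝ≥0∞ :=
  ∫⁻ x in S, ENNReal.ofReal (σ x)

/-- `σ` is a weak `A∞` weight with constants `Cσ, θ`: it is nonnegative, locally
integrable, and `|E|_σ ≤ Cσ (|E|/|Q|)^θ |2Q|_σ` for all cubes `Q` and measurable `E ⊆ Q`. -/
def IsWeakAInfty (n : ℕ) (σ : EuclideanSpace ℝ (Fin n) → ℝ) (Cσ θ : ℝ) : Prop :=
  0 < Cσ ∧ 0 < θ ∧ (∀ x, 0 ≤ σ x) ∧ LocallyIntegrable σ ∧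
    ∀ (c : EuclideanSpace ℝ (Fin n)) (s : ℝ), 0 < s →
      ∀ E ⊆ axisCube n c s, MeasurableSet E →
        wMeasure n σ E ≤
          ENNReal.ofReal (Cσ * ((volume E).toReal / (volume (axisCube n c s)).toReal) ^ θ)
            * wMeasure n σ (axisCube n c (2 * s))

/-- The dyadic cube `2^k(m + [0,1)^n)`. -/
def dyadicCube (n : ℕ) (k : ℤ) (m : Fin n → ℤ) : Set (EuclideanSpace ℝ (Fin n)) :=
  {x | ∀ i, (2 : ℝ) ^ k * m i ≤ x i ∧ x i < (2 : ℝ) ^ k * (m i + 1)}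

/-- The unique dyadic cube of side length `2^k` containing `x`. -/
def dyadicCubeAt (n : ℕ) (k : ℤ) (x : EuclideanSpace ℝ (Fin n)) :
    Set (EuclideanSpace ℝ (Fin n)) :=
  dyadicCube n k (fun i => ⌊x i / (2 : ℝ) ^ k⌋)

/-- The dyadic nonlinear potential `𝒯(μ)(x) = (∑_{Q ∋ x} (μ(Q)/ℓ(Q)^{n−α})^q)^{1/q}`. -/
def Tdyadic (n : ℕ) (α q : ℝ) (μ : Measure (EuclideanSpace ℝ (Fin n)))
    (x : EuclideanSpace ℝ (Fin n)) : ℝ≥0∞ :=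
  (∑' k : ℤ,
      (μ (dyadicCubeAt n k x) / ENNReal.ofReal (((2 : ℝ) ^ k) ^ ((n : ℝ) - α))) ^ q) ^ (1 / q)

/-- The dyadic fractional maximal function `ℳ_α(μ)(x) = sup_{Q ∋ x} μ(Q)/ℓ(Q)^{n−α}`. -/
def Mdyadic (n : ℕ) (α : ℝ) (μ : Measure (EuclideanSpace ℝ (Fin n)))
    (x : EuclideanSpace ℝ (Fin n)) : ℝ≥0∞ :=
  ⨆ k : ℤ, μ (dyadicCubeAt n k x) / ENNReal.ofReal (((2 : ℝ) ^ k) ^ ((n : ℝ) - α))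

/-- `F(μ)(x) = (∑_{j∈ℤ} (μ(B(x,2^j))/2^{j(n−α)})^q)^{1/q}`. -/
def Fpot (n : ℕ) (α q : ℝ) (μ : Measure (EuclideanSpace ℝ (Fin n)))
    (x : EuclideanSpace ℝ (Fin n)) : ℝ≥0∞ :=
  (∑' j : ℤ,
      (μ (Metric.ball x ((2 : ℝ) ^ j)) / ENNReal.ofReal (((2 : ℝ) ^ j) ^ ((n : ℝ) - α))) ^ q) ^ (1 / q)

/-- The exponential function extended to `ℝ≥0∞`. -/
def expE (t : ℝ≥0∞) : ℝ≥0∞ :=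
  if t = ⊤ then ⊤ else ENNReal.ofReal (Real.exp t.toReal)

/-- The centered Hardy–Littlewood maximal function of a measure. -/
def Mhl (n : ℕ) (ν : Measure (EuclideanSpace ℝ (Fin n)))
    (x : EuclideanSpace ℝ (Fin n)) : ℝ≥0∞ :=
  ⨆ (r : ℝ) (_ : 0 < r), ν (Metric.ball x r) / volume (Metric.ball x r)

namespace GLS

variable {n : ℕ}

def cube0 (n : ℕ) (t : ℝ) : Set (EuclideanSpace ℝ (Fin n)) := {x | ∀ i, 0 ≤ x i ∧ x i < t}

lemma cube0_eq_preimage (t : ℝ) :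
    cube0 n t = (MeasurableEquiv.toLp 2 (Fin n → ℝ)).symm ⁻¹' (univ.pi fun _ => Ico 0 t) := by
  ext x
  simp [cube0, Set.mem_pi, Set.mem_Ico]

lemma measurableSet_cube0 (t : ℝ) : MeasurableSet (cube0 n t) := by
  rw [cube0_eq_preimage]
  exact (MeasurableEquiv.toLp 2 (Fin n → ℝ)).symm.measurable
    (MeasurableSet.univ_pi fun _ => measurableSet_Ico)

lemma volume_cube0 (t : ℝ) : volume (cube0 n t) = ENNReal.ofReal t ^ n := by
  rw [cube0_eq_preimage,
    (EuclideanSpace.volume_preserving_symm_measurableEquiv_toLp (Fin n)).measure_preimage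
      ((MeasurableSet.univ_pi fun _ => measurableSet_Ico).nullMeasurableSet),
    volume_pi_pi]
  simp [Real.volume_Ico]

lemma cube0_mono {t t' : ℝ} (h : t ≤ t') : cube0 n t ⊆ cube0 n t' :=
  fun x hx i => ⟨(hx i).1, lt_of_lt_of_le (hx i).2 h⟩

lemma dyadicCubeAt_eq_cube0 {τ : ℝ} (hτ : 0 < τ) {x : EuclideanSpace ℝ (Fin n)}
    (hx : x ∈ cube0 n τ) {k : ℤ} (h : τ ≤ 2 ^ k) :
    dyadicCubeAt n k x = cube0 n ((2:ℝ) ^ k) := by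
  have h2k : (0:ℝ) < 2 ^ k := zpow_pos two_pos k
  have hfl : ∀ i, ⌊x i / (2:ℝ) ^ k⌋ = 0 := by
    intro i
    rw [Int.floor_eq_zero_iff]
    constructor
    · exact div_nonneg (hx i).1 h2k.le
    · rw [div_lt_one h2k]; exact lt_of_lt_of_le (hx i).2 h
  ext y
  simp only [dyadicCubeAt, dyadicCube, cube0, mem_setOf_eq, hfl]
  push_cast
  simp

lemma self_mem_dyadicCubeAt (k : ℤ) (x : EuclideanSpace ℝ (Fin n)) :
    x ∈ dyadicCubeAt n k x := by
  intro i
  have h2k : (0:ℝ) < 2 ^ k := zpow_pos two_pos k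
  constructor
  · rw [mul_comm, ← le_div_iff₀ h2k]; exact Int.floor_le _
  · rw [mul_comm, ← div_lt_iff₀ h2k]; push_cast; exact Int.lt_floor_add_one _

lemma dyadicCubeAt_subset_cube0 {L : ℕ} {x : EuclideanSpace ℝ (Fin n)}
    (hx : x ∈ cube0 n ((2:ℝ) ^ (-(L:ℤ)))) {k : ℤ} (hk : k < -(L:ℤ)) :
    dyadicCubeAt n k x ⊆ cube0 n ((2:ℝ) ^ (-(L:ℤ))) := by
  intro y hy i
  have h2k : (0:ℝ) < 2 ^ k := zpow_pos two_pos k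
  set m : ℤ := ⌊x i / (2:ℝ) ^ k⌋ with hm
  have hm0 : 0 ≤ m := Int.floor_nonneg.2 (div_nonneg (hx i).1 h2k.le)
  have hy1 := (hy i).1
  have hy2 := (hy i).2
  constructor
  · calc (0:ℝ) ≤ 2 ^ k * m := by positivity
      _ ≤ y i := hy1
  · have he : (0:ℤ) ≤ -(L:ℤ) - k := by omega
    have hcast : (2:ℝ) ^ (-(L:ℤ) - k) = ((2 ^ (-(L:ℤ) - k).toNat : ℤ) : ℝ) := by
      push_cast
      rw [← zpow_natCast]
      congr 1
      omega
    have hmlt : (m:ℝ) < 2 ^ (-(L:ℤ) - k) := by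
      have h1 : (m:ℝ) ≤ x i / 2 ^ k := Int.floor_le _
      have h2 : x i / 2 ^ k < 2 ^ (-(L:ℤ)) / 2 ^ k := by gcongr; exact (hx i).2
      calc (m:ℝ) ≤ x i / 2 ^ k := h1
        _ < 2 ^ (-(L:ℤ)) / 2 ^ k := h2
        _ = 2 ^ (-(L:ℤ) - k) := by rw [← zpow_sub₀ (two_ne_zero)]
    have hmlt' : m < 2 ^ (-(L:ℤ) - k).toNat := by
      have := hmlt
      rw [hcast] at this
      exact_mod_cast this
    have hble : (m:ℝ) + 1 ≤ 2 ^ (-(L:ℤ) - k) := by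
      rw [hcast]
      have : m + 1 ≤ 2 ^ (-(L:ℤ) - k).toNat := hmlt'
      exact_mod_cast this
    calc y i < 2 ^ k * ((m:ℝ) + 1) := by push_cast at hy2 ⊢; linarith
      _ ≤ 2 ^ k * 2 ^ (-(L:ℤ) - k) := by nlinarith
      _ = 2 ^ (-(L:ℤ)) := by rw [← zpow_add₀ (two_ne_zero : (2:ℝ) ≠ 0)]; ring_nf

/-! ### The shell density -/

def Sh (n j : ℕ) : Set (EuclideanSpace ℝ (Fin n)) :=
  cube0 n ((2:ℝ)^(-(j:ℤ))) \ cube0 n ((2:ℝ)^(-(j:ℤ)-1))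

def w (n j : ℕ) : ℝ := ((2:ℝ)^(-(j:ℤ)))^n - ((2:ℝ)^(-(j:ℤ)-1))^n

def lam (n : ℕ) (B s : ℝ) (j : ℕ) : ℝ := B * s^j / w n j

def fdens (n K : ℕ) (B s : ℝ) (x : EuclideanSpace ℝ (Fin n)) : ℝ :=
  ∑ j ∈ Finset.range K, (Sh n j).indicator (fun _ => lam n B s j) x

lemma measurableSet_Sh (j : ℕ) : MeasurableSet (Sh n j) :=
  (measurableSet_cube0 _).diff (measurableSet_cube0 _)

lemma w_pos (hn : 1 ≤ n) (j : ℕ) : 0 < w n j := by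
  have h1 : (0:ℝ) < (2:ℝ)^(-(j:ℤ)-1) := zpow_pos two_pos _
  have h2 : (2:ℝ)^(-(j:ℤ)-1) < (2:ℝ)^(-(j:ℤ)) := by
    apply zpow_lt_zpow_right₀ (by norm_num : (1:ℝ) < 2); omega
  have := pow_lt_pow_left₀ h2 h1.le (by omega : n ≠ 0)
  simpa [w, sub_pos] using this

lemma lam_nonneg (hn : 1 ≤ n) {B s : ℝ} (hB : 0 ≤ B) (hs : 0 ≤ s) (j : ℕ) :
    0 ≤ lam n B s j :=
  div_nonneg (by positivity) (w_pos hn j).le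

lemma volume_Sh (j : ℕ) : volume (Sh n j) = ENNReal.ofReal (w n j) := by
  have hsub : cube0 n ((2:ℝ)^(-(j:ℤ)-1)) ⊆ cube0 n ((2:ℝ)^(-(j:ℤ))) :=
    cube0_mono (by apply zpow_le_zpow_right₀ (by norm_num : (1:ℝ) ≤ 2); omega)
  have h1 : (0:ℝ) ≤ (2:ℝ)^(-(j:ℤ)-1) := (_root_.zpow_pos two_pos _).le
  have h2 : (0:ℝ) ≤ (2:ℝ)^(-(j:ℤ)) := (_root_.zpow_pos two_pos _).le
  rw [Sh, measure_diff hsub (measurableSet_cube0 _).nullMeasurableSet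
      (by rw [volume_cube0]; exact (pow_lt_top ofReal_lt_top).ne),
    volume_cube0, volume_cube0, ← ENNReal.ofReal_pow h2, ← ENNReal.ofReal_pow h1,
    ← ENNReal.ofReal_sub _ (by positivity), w]

lemma mass_Sh (hn : 1 ≤ n) {B s : ℝ} (hB : 0 ≤ B) (hs : 0 ≤ s) (j : ℕ) :
    ENNReal.ofReal (lam n B s j) * volume (Sh n j) = ENNReal.ofReal (B * s^j) := by
  rw [volume_Sh, ← ENNReal.ofReal_mul (lam_nonneg hn hB hs j), lam,
    div_mul_cancel₀ _ (w_pos hn j).ne']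

lemma measurable_fdens (K : ℕ) (B s : ℝ) : Measurable (fdens n K B s) :=
  Finset.measurable_sum _ fun j _ => Measurable.indicator measurable_const (measurableSet_Sh j)

lemma fdens_nonneg (hn : 1 ≤ n) {K : ℕ} {B s : ℝ} (hB : 0 ≤ B) (hs : 0 ≤ s) (x) :
    0 ≤ fdens n K B s x :=
  Finset.sum_nonneg fun j _ => Set.indicator_nonneg (fun _ _ => lam_nonneg hn hB hs j) x

lemma ofReal_fdens (hn : 1 ≤ n) {K : ℕ} {B s : ℝ} (hB : 0 ≤ B) (hs : 0 ≤ s) (x) :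
    ENNReal.ofReal (fdens n K B s x)
      = ∑ j ∈ Finset.range K, (Sh n j).indicator (fun _ => ENNReal.ofReal (lam n B s j)) x := by
  rw [fdens, ENNReal.ofReal_sum_of_nonneg
    (fun j _ => Set.indicator_nonneg (fun _ _ => lam_nonneg hn hB hs j) x)]
  refine Finset.sum_congr rfl fun j _ => ?_
  by_cases hx : x ∈ Sh n j <;> simp [hx]

lemma mu_apply (hn : 1 ≤ n) {K : ℕ} {B s : ℝ} (hB : 0 ≤ B) (hs : 0 ≤ s)
    {A : Set (EuclideanSpace ℝ (Fin n))} (hA : MeasurableSet A) :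
    (volume.withDensity fun y => ENNReal.ofReal (fdens n K B s y)) A
      = ∑ j ∈ Finset.range K, ENNReal.ofReal (lam n B s j) * volume (Sh n j ∩ A) := by
  rw [withDensity_apply _ hA]
  calc ∫⁻ y in A, ENNReal.ofReal (fdens n K B s y)
      = ∫⁻ y in A, ∑ j ∈ Finset.range K,
          (Sh n j).indicator (fun _ => ENNReal.ofReal (lam n B s j)) y := by
        congr 1; ext y; exact ofReal_fdens hn hB hs y
    _ = ∑ j ∈ Finset.range K, ∫⁻ y in A,
          (Sh n j).indicator (fun _ => ENNReal.ofReal (lam n B s j)) y :=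
        lintegral_finset_sum _ fun j _ =>
          Measurable.indicator measurable_const (measurableSet_Sh j)
    _ = ∑ j ∈ Finset.range K, ENNReal.ofReal (lam n B s j) * volume (Sh n j ∩ A) := by
        refine Finset.sum_congr rfl fun j _ => ?_
        rw [lintegral_indicator (measurableSet_Sh j), setLIntegral_const,
          Measure.restrict_apply (measurableSet_Sh j)]

lemma Sh_inter_cube {j k : ℕ} (hkj : k ≤ j) :
    Sh n j ∩ cube0 n ((2:ℝ)^(-(k:ℤ))) = Sh n j := by
  rw [inter_eq_left]
  exact fun x hx =>
    cube0_mono (by apply zpow_le_zpow_right₀ (by norm_num : (1:ℝ) ≤ 2); omega) hx.1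

lemma Sh_inter_cube_empty {j k : ℕ} (hjk : j < k) :
    Sh n j ∩ cube0 n ((2:ℝ)^(-(k:ℤ))) = ∅ := by
  rw [eq_empty_iff_forall_notMem]
  rintro x ⟨⟨-, hx2⟩, hx3⟩
  exact hx2 (cube0_mono (by apply zpow_le_zpow_right₀ (by norm_num : (1:ℝ) ≤ 2); omega) hx3)

lemma mu_cube (hn : 1 ≤ n) {K : ℕ} {B s : ℝ} (hB : 0 ≤ B) (hs : 0 ≤ s) (k : ℕ) :
    (volume.withDensity fun y => ENNReal.ofReal (fdens n K B s y))
        (cube0 n ((2:ℝ)^(-(k:ℤ))))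
      = ENNReal.ofReal (∑ j ∈ Finset.Ico k K, B * s^j) := by
  rw [mu_apply hn hB hs (measurableSet_cube0 _),
    ENNReal.ofReal_sum_of_nonneg (fun j _ => by positivity)]
  rw [← Finset.sum_filter_add_sum_filter_not (Finset.range K) (fun j => k ≤ j)]
  have h1 : ∀ j ∈ (Finset.range K).filter (fun j => k ≤ j),
      ENNReal.ofReal (lam n B s j) * volume (Sh n j ∩ cube0 n ((2:ℝ)^(-(k:ℤ))))
        = ENNReal.ofReal (B * s ^ j) := fun j hj => by
    rw [Sh_inter_cube (Finset.mem_filter.1 hj).2, mass_Sh hn hB hs]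
  have h2 : ∀ j ∈ (Finset.range K).filter (fun j => ¬ k ≤ j),
      ENNReal.ofReal (lam n B s j) * volume (Sh n j ∩ cube0 n ((2:ℝ)^(-(k:ℤ))))
        = 0 := fun j hj => by
    have hjk : j < k := by have := (Finset.mem_filter.1 hj).2; omega
    rw [Sh_inter_cube_empty hjk]
    simp
  rw [Finset.sum_congr rfl h1, Finset.sum_congr rfl h2, Finset.sum_const_zero, add_zero]
  apply Finset.sum_congr _ (fun _ _ => rfl)
  ext j
  simp only [Finset.mem_filter, Finset.mem_Ico, Finset.mem_range]
  omega

lemma mu_univ (hn : 1 ≤ n) {K : ℕ} {B s : ℝ} (hB : 0 ≤ B) (hs : 0 ≤ s) :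
    (volume.withDensity fun y => ENNReal.ofReal (fdens n K B s y)) univ
      = ENNReal.ofReal (∑ j ∈ Finset.range K, B * s^j) := by
  rw [mu_apply hn hB hs MeasurableSet.univ,
    ENNReal.ofReal_sum_of_nonneg (fun j _ => by positivity)]
  exact Finset.sum_congr rfl fun j _ => by rw [inter_univ, mass_Sh hn hB hs]

lemma fdens_eq_zero {K : ℕ} {B s : ℝ} {x : EuclideanSpace ℝ (Fin n)}
    (hx : x ∉ cube0 n 1) : fdens n K B s x = 0 := by
  apply Finset.sum_eq_zero
  intro j _
  apply Set.indicator_of_notMem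
  intro hmem
  apply hx
  apply cube0_mono ?_ hmem.1
  have := zpow_le_zpow_right₀ (by norm_num : (1:ℝ) ≤ 2) (by omega : -(j:ℤ) ≤ 0)
  simpa using this

lemma mu_outside (hn : 1 ≤ n) {K : ℕ} {B s : ℝ} :
    (volume.withDensity fun y => ENNReal.ofReal (fdens n K B s y)) ((cube0 n 1)ᶜ) = 0 := by
  rw [withDensity_apply _ (measurableSet_cube0 (n := n) 1).compl]
  rw [setLIntegral_congr_fun (measurableSet_cube0 (n := n) 1).compl
    ((fun x hx => by rw [fdens_eq_zero hx, ENNReal.ofReal_zero]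
      : ∀ x ∈ (cube0 n 1)ᶜ, ENNReal.ofReal (fdens n K B s x) = (fun _ => (0:ℝ≥0∞)) x))]
  simp

/-! ### geometric sums and the exponent bridge -/

lemma geom_sum_Ico_le {B s : ℝ} (hB : 0 ≤ B) (hs0 : 0 ≤ s) (hs1 : s < 1) (k K : ℕ) :
    ∑ j ∈ Finset.Ico k K, B * s^j ≤ B * s^k / (1 - s) := by
  have h1s : (0:ℝ) < 1 - s := by linarith
  rw [Finset.sum_Ico_eq_sum_range]
  have heq : ∀ i, B * s^(k+i) = B*s^k * s^i := fun i => by rw [pow_add]; ring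
  simp_rw [heq]
  rw [← Finset.mul_sum]
  have hgeom : ∑ i ∈ Finset.range (K-k), s^i ≤ (1-s)⁻¹ := by
    rw [geom_sum_eq hs1.ne]
    have h2 : (s ^ (K-k) - 1) / (s - 1) = (1 - s^(K-k))/(1-s) := by
      rw [← neg_div_neg_eq]; ring_nf
    rw [h2, ← one_div]
    gcongr
    nlinarith [pow_nonneg hs0 (K-k)]
  calc B*s^k * ∑ i ∈ Finset.range (K-k), s^i ≤ B*s^k * (1-s)⁻¹ := by
        apply mul_le_mul_of_nonneg_left hgeom (by positivity)
    _ = B*s^k/(1-s) := by rw [div_eq_mul_inv]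

lemma geom_sum_Ico_ge {B s : ℝ} (hB : 0 ≤ B) (hs0 : 0 ≤ s) {k K : ℕ} (hkK : k < K) :
    B * s^k ≤ ∑ j ∈ Finset.Ico k K, B*s^j :=
  Finset.single_le_sum (f := fun j => B*s^j) (fun j _ => by positivity)
    (Finset.mem_Ico.2 ⟨le_refl k, hkK⟩)

lemma denom_eq (nr α : ℝ) (k : ℤ) :
    ((2:ℝ)^k)^(nr-α) = ((2:ℝ)^(α-nr))^(-k) := by
  rw [← Real.rpow_intCast 2 k, ← Real.rpow_mul (by norm_num : (0:ℝ) ≤ 2),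
    ← Real.rpow_intCast ((2:ℝ)^(α-nr)) (-k),
    ← Real.rpow_mul (by positivity)]
  congr 1
  push_cast
  ring

/-! ### the big cube and tail sums -/

def bigCube (n m : ℕ) : Set (EuclideanSpace ℝ (Fin n)) := {x | ∀ i, |x i| ≤ (2:ℝ)^m}

lemma bigCube_eq_preimage (n m : ℕ) :
    bigCube n m = (MeasurableEquiv.toLp 2 (Fin n → ℝ)).symm ⁻¹'
      (univ.pi fun _ => Icc (-(2:ℝ)^m) ((2:ℝ)^m)) := by
  ext x
  simp [bigCube, Set.mem_pi,
    Set.mem_Icc, abs_le, Pi.le_def, forall_and]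

lemma volume_bigCube (n m : ℕ) :
    volume (bigCube n m) = ENNReal.ofReal (2*(2:ℝ)^m) ^ n := by
  rw [bigCube_eq_preimage,
    (EuclideanSpace.volume_preserving_symm_measurableEquiv_toLp (Fin n)).measure_preimage
      ((MeasurableSet.univ_pi fun _ => measurableSet_Icc).nullMeasurableSet),
    volume_pi_pi]
  have h : ((2:ℝ)^m - (-(2:ℝ)^m)) = 2*(2:ℝ)^m := by ring
  simp [Real.volume_Icc, h]

lemma tsum_int_tail (S : ℝ≥0∞) (m : ℕ) :
    (∑' k : ℤ, if (m:ℤ) ≤ k then S^(k.toNat) else 0) = S^m * (1 - S)⁻¹ := by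
  have hinj : Function.Injective (fun i : ℕ => (m:ℤ) + i) := by
    intro a b h; simpa using h
  rw [← Function.Injective.tsum_eq hinj (f := fun k : ℤ => if (m:ℤ) ≤ k then S^(k.toNat) else 0)]
  · have heq : ∀ i : ℕ, (if (m:ℤ) ≤ (m:ℤ) + i then S^(((m:ℤ)+i).toNat) else 0) = S^m * S^i := by
      intro i
      rw [if_pos (by omega)]
      rw [show ((m:ℤ)+i).toNat = m + i by omega, pow_add]
    simp_rw [heq]
    rw [ENNReal.tsum_mul_left, tsum_geometric]
  · intro k hk
    simp only [Function.mem_support, ne_eq, ite_eq_right_iff, not_forall] at hk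
    obtain ⟨hmk, -⟩ := hk
    exact ⟨(k - m).toNat, by simp; omega⟩

lemma tail_le_one {s : ℝ} (hs0 : 0 < s) {m : ℕ} (hm : s^m ≤ 1 - s) :
    (ENNReal.ofReal s)^m * (1 - ENNReal.ofReal s)⁻¹ ≤ 1 := by
  have h1 : (1:ℝ≥0∞) - ENNReal.ofReal s = ENNReal.ofReal (1 - s) := by
    rw [← ENNReal.ofReal_one, ← ENNReal.ofReal_sub _ hs0.le]
  have h2 : (ENNReal.ofReal s)^m = ENNReal.ofReal (s^m) := (ENNReal.ofReal_pow hs0.le m).symm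
  rw [h1, h2]
  calc ENNReal.ofReal (s^m) * (ENNReal.ofReal (1-s))⁻¹
      ≤ ENNReal.ofReal (1-s) * (ENNReal.ofReal (1-s))⁻¹ :=
        mul_le_mul_left (ENNReal.ofReal_le_ofReal hm) _
    _ ≤ 1 := ENNReal.mul_inv_le_one _

lemma outer_sep {m : ℕ} (hm : 1 ≤ m) {x : EuclideanSpace ℝ (Fin n)} (hx : x ∉ bigCube n m)
    {k : ℤ} (hk : k < (m:ℤ)) : dyadicCubeAt n k x ⊆ (cube0 n 1)ᶜ := by
  intro y hy hyC
  simp only [bigCube, mem_setOf_eq, not_forall] at hx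
  obtain ⟨i, hi⟩ := hx
  rw [not_le] at hi
  have hxk := self_mem_dyadicCubeAt k x i
  have hyk := hy i
  have hyC' := hyC i
  have h2k : (2:ℝ)^k ≤ (2:ℝ)^((m:ℤ)-1) :=
    zpow_le_zpow_right₀ (by norm_num : (1:ℝ) ≤ 2) (by omega)
  have h2m : (2:ℝ)^((m:ℤ)-1) ≤ (2:ℝ)^(m:ℤ) - 1 := by
    have h1 : (1:ℝ) ≤ 2^((m:ℤ)-1) := by
      have := zpow_le_zpow_right₀ (by norm_num : (1:ℝ) ≤ 2) (show (0:ℤ) ≤ (m:ℤ)-1 by omega)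
      simpa using this
    have h2 : (2:ℝ)^(m:ℤ) = 2^((m:ℤ)-1) * 2 := by
      rw [← zpow_add_one₀ (two_ne_zero : (2:ℝ) ≠ 0)]; ring_nf
    linarith
  have hxy : |x i - y i| < 2^k := by
    obtain ⟨hx1, hx2⟩ := hxk
    obtain ⟨hy1, hy2⟩ := hyk
    rw [abs_lt]
    constructor <;> push_cast at hx1 hx2 hy1 hy2 <;> linarith
  have hlow : (2:ℝ)^(m:ℤ) - 1 < |x i - y i| := by
    have habs : |x i| - |y i| ≤ |x i - y i| := abs_sub_abs_le_abs_sub _ _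
    have hyabs : |y i| ≤ 1 := by rw [abs_le]; constructor <;> linarith [hyC'.1, hyC'.2]
    have hcast : (2:ℝ)^(m:ℤ) = (2:ℝ)^(m:ℕ) := zpow_natCast 2 m
    rw [hcast]
    linarith
  linarith

lemma Tdyadic_one (n : ℕ) (α : ℝ) (μ : Measure (EuclideanSpace ℝ (Fin n)))
    (x : EuclideanSpace ℝ (Fin n)) :
    Tdyadic n α 1 μ x
      = ∑' k : ℤ, μ (dyadicCubeAt n k x) / ENNReal.ofReal (((2:ℝ)^k)^((n:ℝ)-α)) := by
  rw [Tdyadic]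
  simp

end GLS
set_option maxHeartbeats 1000000 in
theorem good_lambda_sharpness (n : ℕ) (hn : 1 ≤ n) (α : ℝ) (hα : 0 < α) (hαn : α < n) :
    ∃ c₁ c₂ : ℝ, 0 < c₁ ∧ 0 < c₂ ∧
      ∀ ε : ℝ, 0 < ε →
        ∃ f : EuclideanSpace ℝ (Fin n) → ℝ, Measurable f ∧ (∀ x, 0 ≤ f x) ∧
          (∃ Cb : ℝ, ∀ x, f x ≤ Cb) ∧ HasCompactSupport f ∧
          ENNReal.ofReal (c₁ * Real.exp (-c₂ / ε)) *
              volume {x | ENNReal.ofReal 1 <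
                Tdyadic n α 1 (volume.withDensity fun y => ENNReal.ofReal (f y)) x}
            ≤ volume {x | ENNReal.ofReal 2 <
                Tdyadic n α 1 (volume.withDensity fun y => ENNReal.ofReal (f y)) x ∧
                Mdyadic n α (volume.withDensity fun y => ENNReal.ofReal (f y)) x ≤
                  ENNReal.ofReal ε} ∧
          0 < volume {x | ENNReal.ofReal 1 <
                Tdyadic n α 1 (volume.withDensity fun y => ENNReal.ofReal (f y)) x} ∧
          volume {x | ENNReal.ofReal 1 <
                Tdyadic n α 1 (volume.withDensity fun y => ENNReal.ofReal (f y)) x} < ⊤ := by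
  classical
  have hn1 : (1:ℝ) ≤ (n:ℝ) := by exact_mod_cast hn
  set s : ℝ := (2:ℝ) ^ (α - (n:ℝ)) with hs_def
  have hs0 : 0 < s := Real.rpow_pos_of_pos two_pos _
  have hs1 : s < 1 := Real.rpow_lt_one_of_one_lt_of_neg one_lt_two (by linarith)
  have h1s : (0:ℝ) < 1 - s := by linarith
  obtain ⟨m₀, hm₀⟩ := exists_pow_lt_of_lt_one h1s hs1
  set m : ℕ := max m₀ 1 with hm_def
  have hm1 : 1 ≤ m := le_max_right _ _
  have hmtail : s^m ≤ 1 - s :=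
    le_trans (pow_le_pow_of_le_one hs0.le hs1.le (le_max_left _ _)) hm₀.le
  have hlog2 : 0 < Real.log 2 := Real.log_pos one_lt_two
  have hnpos : (0:ℝ) < (n:ℝ) := by linarith
  set c₂ : ℝ := 3*(n:ℝ)*Real.log 2/(1-s) with hc₂_def
  have hc₂ : 0 < c₂ := div_pos (by positivity) h1s
  set Vb : ℝ := (2*(2:ℝ)^m)^n with hVb_def
  have hVb : 0 < Vb := by positivity
  set c₁ : ℝ := Real.exp (-((n:ℝ)*Real.log 2)) * Real.exp (-c₂) / Vb with hc₁_def
  have hc₁ : 0 < c₁ := by positivity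
  refine ⟨c₁, c₂, hc₁, hc₂, ?_⟩
  intro ε hε
  set ε₀ : ℝ := min ε 1 with hε₀_def
  have hε₀ : 0 < ε₀ := lt_min hε one_pos
  have hε₀ε : ε₀ ≤ ε := min_le_left _ _
  have hε₀1 : ε₀ ≤ 1 := min_le_right _ _
  set B : ℝ := ε₀ * (1 - s) with hB_def
  have hB : 0 < B := by positivity
  set K : ℕ := ⌈(3:ℝ)/B⌉₊ with hK_def
  have hK3 : 3 ≤ (K:ℝ) * B := by
    have h := Nat.le_ceil ((3:ℝ)/B)
    calc (3:ℝ) = 3/B*B := by field_simp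
      _ ≤ K*B := mul_le_mul_of_nonneg_right h hB.le
  have hKup : (K:ℝ) < 3/B + 1 := Nat.ceil_lt_add_one (by positivity)
  -- the density and measure
  set μ : Measure (EuclideanSpace ℝ (Fin n)) :=
    volume.withDensity fun y => ENNReal.ofReal (GLS.fdens n K B s y) with hμ_def
  -- basic measure facts
  have hμcube : ∀ k : ℕ, μ (GLS.cube0 n ((2:ℝ)^(-(k:ℤ))))
      = ENNReal.ofReal (∑ j ∈ Finset.Ico k K, B*s^j) :=
    fun k => GLS.mu_cube hn hB.le hs0.le k
  have hμup : ∀ k : ℕ, μ (GLS.cube0 n ((2:ℝ)^(-(k:ℤ)))) ≤ ENNReal.ofReal (ε₀ * s^k) := by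
    intro k
    rw [hμcube k]
    apply ENNReal.ofReal_le_ofReal
    calc ∑ j ∈ Finset.Ico k K, B*s^j ≤ B*s^k/(1-s) :=
          GLS.geom_sum_Ico_le hB.le hs0.le hs1 k K
      _ = ε₀ * s^k := by rw [hB_def]; field_simp
  have hμlow : ∀ k : ℕ, k < K →
      ENNReal.ofReal (B*s^k) ≤ μ (GLS.cube0 n ((2:ℝ)^(-(k:ℤ)))) := by
    intro k hk
    rw [hμcube k]
    exact ENNReal.ofReal_le_ofReal (GLS.geom_sum_Ico_ge hB.le hs0.le hk)
  have hμK : μ (GLS.cube0 n ((2:ℝ)^(-(K:ℤ)))) = 0 := by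
    rw [hμcube K]
    simp
  have hμuniv : μ univ ≤ ENNReal.ofReal ε₀ := by
    rw [GLS.mu_univ hn hB.le hs0.le]
    apply ENNReal.ofReal_le_ofReal
    calc ∑ j ∈ Finset.range K, B*s^j = ∑ j ∈ Finset.Ico 0 K, B*s^j := by
          rw [Finset.range_eq_Ico]
      _ ≤ B*s^0/(1-s) := GLS.geom_sum_Ico_le hB.le hs0.le hs1 0 K
      _ = ε₀ := by rw [hB_def]; field_simp
  have hμuniv1 : μ univ ≤ 1 := le_trans hμuniv (by
    rw [← ENNReal.ofReal_one]; exact ENNReal.ofReal_le_ofReal hε₀1)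
  have hμout : μ ((GLS.cube0 n 1)ᶜ) = 0 := GLS.mu_outside hn
  -- denominators
  have hden : ∀ k : ℤ, ENNReal.ofReal (((2:ℝ)^k)^((n:ℝ)-α)) = ENNReal.ofReal (s^(-k)) := by
    intro k
    rw [GLS.denom_eq (n:ℝ) α k, hs_def]
  -- x in the small cube: identification of dyadic cubes
  have hxcube : ∀ x ∈ GLS.cube0 n ((2:ℝ)^(-(K:ℤ))), ∀ k : ℤ, -(K:ℤ) ≤ k →
      dyadicCubeAt n k x = GLS.cube0 n ((2:ℝ)^k) := by
    intro x hx k hk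
    exact GLS.dyadicCubeAt_eq_cube0 (zpow_pos two_pos _) hx
      (zpow_le_zpow_right₀ (by norm_num : (1:ℝ) ≤ 2) hk)
  -- T lower bound on the small cube
  have hCK_T : ∀ x ∈ GLS.cube0 n ((2:ℝ)^(-(K:ℤ))),
      ENNReal.ofReal 2 < Tdyadic n α 1 μ x := by
    intro x hx
    rw [GLS.Tdyadic_one]
    have hterm : ∀ k ∈ Finset.range K, ENNReal.ofReal B ≤
        μ (dyadicCubeAt n (-(k:ℤ)) x) / ENNReal.ofReal (((2:ℝ)^(-(k:ℤ)))^((n:ℝ)-α)) := by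
      intro k hk
      have hkK : k < K := Finset.mem_range.1 hk
      rw [hxcube x hx (-(k:ℤ)) (by omega), hden (-(k:ℤ)), neg_neg, zpow_natCast]
      calc ENNReal.ofReal B = ENNReal.ofReal (B*s^k) / ENNReal.ofReal (s^k) := by
            rw [← ENNReal.ofReal_div_of_pos (by positivity),
              mul_div_cancel_right₀ _ (by positivity : (s:ℝ)^k ≠ 0)]
        _ ≤ μ (GLS.cube0 n ((2:ℝ)^(-(k:ℤ)))) / ENNReal.ofReal (s^k) :=
            ENNReal.div_le_div_right (hμlow k hkK) _
    calc ENNReal.ofReal 2 < ENNReal.ofReal ((K:ℝ)*B) := by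
          rw [ENNReal.ofReal_lt_ofReal_iff (by positivity)]; linarith
      _ = ∑ k ∈ Finset.range K, ENNReal.ofReal B := by
          rw [Finset.sum_const, Finset.card_range, nsmul_eq_mul,
            ← ENNReal.ofReal_natCast, ← ENNReal.ofReal_mul (by positivity)]
      _ ≤ ∑ k ∈ Finset.range K,
            μ (dyadicCubeAt n (-(k:ℤ)) x) / ENNReal.ofReal (((2:ℝ)^(-(k:ℤ)))^((n:ℝ)-α)) :=
          Finset.sum_le_sum hterm
      _ = ∑ kk ∈ (Finset.range K).image (fun k : ℕ => -(k:ℤ)),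
            μ (dyadicCubeAt n kk x) / ENNReal.ofReal (((2:ℝ)^kk)^((n:ℝ)-α)) := by
          have hsum := Finset.sum_image
            (f := fun kk : ℤ => μ (dyadicCubeAt n kk x)
              / ENNReal.ofReal (((2:ℝ)^kk)^((n:ℝ)-α)))
            (g := fun k : ℕ => -(k:ℤ)) (s := Finset.range K)
            (fun a _ b _ h => by simpa using h)
          exact hsum.symm
      _ ≤ ∑' kk : ℤ, μ (dyadicCubeAt n kk x) / ENNReal.ofReal (((2:ℝ)^kk)^((n:ℝ)-α)) :=
          ENNReal.sum_le_tsum _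
  -- M upper bound on the small cube
  have hCK_M : ∀ x ∈ GLS.cube0 n ((2:ℝ)^(-(K:ℤ))),
      Mdyadic n α μ x ≤ ENNReal.ofReal ε := by
    intro x hx
    rw [Mdyadic]
    apply iSup_le
    intro k
    by_cases hk : -(K:ℤ) ≤ k
    · rw [hxcube x hx k hk, hden k]
      have key : μ (GLS.cube0 n ((2:ℝ)^k)) / ENNReal.ofReal (s^(-k)) ≤ ENNReal.ofReal ε₀ := by
        by_cases hk0 : k ≤ 0
        · set j : ℕ := (-k).toNat with hj_def
          have hkj : k = -(j:ℤ) := by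
            have := Int.toNat_of_nonneg (by omega : 0 ≤ -k); omega
          rw [hkj, neg_neg, zpow_natCast]
          calc μ (GLS.cube0 n ((2:ℝ)^(-(j:ℤ)))) / ENNReal.ofReal (s^j)
              ≤ ENNReal.ofReal (ε₀*s^j) / ENNReal.ofReal (s^j) :=
                ENNReal.div_le_div_right (hμup j) _
            _ = ENNReal.ofReal ε₀ := by
                rw [← ENNReal.ofReal_div_of_pos (by positivity),
                  mul_div_cancel_right₀ _ (by positivity : (s:ℝ)^j ≠ 0)]
        · have hμle : μ (GLS.cube0 n ((2:ℝ)^k)) ≤ ENNReal.ofReal ε₀ :=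
            le_trans (measure_mono (subset_univ _)) hμuniv
          have hden1 : (1:ℝ≥0∞) ≤ ENNReal.ofReal (s^(-k)) := by
            rw [ENNReal.one_le_ofReal, zpow_neg]
            rw [le_inv_comm₀ one_pos (by positivity)]
            simpa using zpow_le_one₀ hs0 hs1.le (by omega : (0:ℤ) ≤ k)
          calc μ (GLS.cube0 n ((2:ℝ)^k)) / ENNReal.ofReal (s^(-k))
              ≤ ENNReal.ofReal ε₀ / 1 := ENNReal.div_le_div hμle hden1
            _ = ENNReal.ofReal ε₀ := div_one _
      exact le_trans key (ENNReal.ofReal_le_ofReal hε₀ε)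
    · have hsub := GLS.dyadicCubeAt_subset_cube0 hx (by omega : k < -(K:ℤ))
      have hz : μ (dyadicCubeAt n k x) = 0 :=
        le_antisymm (le_trans (measure_mono hsub) hμK.le) zero_le
      rw [hz, ENNReal.zero_div]
      exact zero_le
  -- outer containment
  have houter : {x | ENNReal.ofReal 1 < Tdyadic n α 1 μ x} ⊆ GLS.bigCube n m := by
    intro x hxT
    by_contra hxB
    apply absurd hxT
    rw [mem_setOf_eq, not_lt, GLS.Tdyadic_one, ENNReal.ofReal_one]
    calc ∑' k : ℤ, μ (dyadicCubeAt n k x) / ENNReal.ofReal (((2:ℝ)^k)^((n:ℝ)-α))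
        ≤ ∑' k : ℤ, (if (m:ℤ) ≤ k then (ENNReal.ofReal s)^(k.toNat) else 0) := by
          apply ENNReal.tsum_le_tsum
          intro k
          by_cases hk : (m:ℤ) ≤ k
          · rw [if_pos hk, hden k]
            have hμ1 : μ (dyadicCubeAt n k x) ≤ 1 :=
              le_trans (measure_mono (subset_univ _)) hμuniv1
            calc μ (dyadicCubeAt n k x) / ENNReal.ofReal (s^(-k))
                ≤ 1 / ENNReal.ofReal (s^(-k)) := ENNReal.div_le_div_right hμ1 _
              _ = ENNReal.ofReal 1 / ENNReal.ofReal (s^(-k)) := by rw [ENNReal.ofReal_one]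
              _ = ENNReal.ofReal (1/s^(-k)) :=
                  (ENNReal.ofReal_div_of_pos (by positivity)).symm
              _ = ENNReal.ofReal (s^k) := by rw [zpow_neg, one_div, inv_inv]
              _ = ENNReal.ofReal (s^(k.toNat)) := by
                  rw [← zpow_natCast s k.toNat, Int.toNat_of_nonneg (by omega : (0:ℤ) ≤ k)]
              _ = (ENNReal.ofReal s)^(k.toNat) := ENNReal.ofReal_pow hs0.le _
          · rw [if_neg hk]
            have hsub : dyadicCubeAt n k x ⊆ (GLS.cube0 n 1)ᶜ :=
              GLS.outer_sep hm1 hxB (by omega)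
            have hz : μ (dyadicCubeAt n k x) = 0 :=
              le_antisymm (le_trans (measure_mono hsub) hμout.le) zero_le
            rw [hz, ENNReal.zero_div]
      _ = (ENNReal.ofReal s)^m * (1 - ENNReal.ofReal s)⁻¹ := GLS.tsum_int_tail _ m
      _ ≤ 1 := GLS.tail_le_one hs0 hmtail
  -- volumes
  have hvolCK : volume (GLS.cube0 n ((2:ℝ)^(-(K:ℤ))))
      = ENNReal.ofReal (((2:ℝ)^(-(K:ℤ)))^n) := by
    rw [GLS.volume_cube0, ← ENNReal.ofReal_pow (by positivity)]
  have hsubgood : GLS.cube0 n ((2:ℝ)^(-(K:ℤ))) ⊆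
      {x | ENNReal.ofReal 2 < Tdyadic n α 1 μ x ∧ Mdyadic n α μ x ≤ ENNReal.ofReal ε} :=
    fun x hx => ⟨hCK_T x hx, hCK_M x hx⟩
  have hsub1 : GLS.cube0 n ((2:ℝ)^(-(K:ℤ))) ⊆ {x | ENNReal.ofReal 1 < Tdyadic n α 1 μ x} := by
    intro x hx
    calc ENNReal.ofReal 1 ≤ ENNReal.ofReal 2 := ENNReal.ofReal_le_ofReal (by norm_num)
      _ < Tdyadic n α 1 μ x := hCK_T x hx
  -- the key real inequality
  have keyreal : c₁ * Real.exp (-c₂/ε) * Vb ≤ ((2:ℝ)^(-(K:ℤ)))^n := by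
    have hbase : ((2:ℝ)^(-(K:ℤ))) = Real.exp (Real.log 2 * (-(K:ℝ))) := by
      rw [← Real.rpow_intCast 2 (-(K:ℤ)), Real.rpow_def_of_pos two_pos]
      push_cast
      ring_nf
    have hRHS : ((2:ℝ)^(-(K:ℤ)))^n = Real.exp ((n:ℝ) * (Real.log 2 * (-(K:ℝ)))) := by
      rw [hbase, ← Real.exp_nat_mul]
    have hLHS : c₁ * Real.exp (-c₂/ε) * Vb
        = Real.exp (-((n:ℝ)*Real.log 2) + -c₂ + -c₂/ε) := by
      rw [hc₁_def, Real.exp_add, Real.exp_add]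
      field_simp
    rw [hLHS, hRHS]
    apply Real.exp_le_exp.2
    have h3B : (3/B)*((n:ℝ)*Real.log 2) = c₂/ε₀ := by
      rw [hc₂_def, hB_def]
      field_simp
    have hc₂ε : c₂/ε₀ ≤ c₂ + c₂/ε := by
      rcases min_cases ε 1 with ⟨h1, h2⟩ | ⟨h1, h2⟩
      · rw [hε₀_def, h1]
        have : 0 < c₂/ε := by positivity
        linarith [hc₂.le]
      · rw [hε₀_def, h1, div_one]
        have : 0 ≤ c₂/ε := by positivity
        linarith
    have hKb : (K:ℝ)*((n:ℝ)*Real.log 2) ≤ (3/B)*((n:ℝ)*Real.log 2) + (n:ℝ)*Real.log 2 := by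
      have hnl : (0:ℝ) ≤ (n:ℝ)*Real.log 2 := by positivity
      nlinarith [hKup]
    have hfin : (K:ℝ)*((n:ℝ)*Real.log 2) ≤ (n:ℝ)*Real.log 2 + c₂ + c₂/ε := by
      rw [h3B] at hKb
      linarith
    have h2 : -((n:ℝ)*Real.log 2) + -c₂ + -(c₂/ε) ≤ -((K:ℝ)*((n:ℝ)*Real.log 2)) := by
      linarith
    calc -((n:ℝ)*Real.log 2) + -c₂ + -c₂/ε
        = -((n:ℝ)*Real.log 2) + -c₂ + -(c₂/ε) := by ring
      _ ≤ -((K:ℝ)*((n:ℝ)*Real.log 2)) := h2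
      _ = (n:ℝ) * (Real.log 2 * -(K:ℝ)) := by ring
  -- assemble
  refine ⟨GLS.fdens n K B s, GLS.measurable_fdens K B s, GLS.fdens_nonneg hn hB.le hs0.le,
    ⟨∑ j ∈ Finset.range K, GLS.lam n B s j, ?_⟩, ?_, ?_, ?_, ?_⟩
  · -- bounded
    intro x
    apply Finset.sum_le_sum
    intro j _
    by_cases hxS : x ∈ GLS.Sh n j
    · rw [Set.indicator_of_mem hxS]
    · rw [Set.indicator_of_notMem hxS]
      exact GLS.lam_nonneg hn hB.le hs0.le j
  · -- compact support
    apply HasCompactSupport.intro (isCompact_closedBall (0:EuclideanSpace ℝ (Fin n)) (n:ℝ))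
    intro x hx
    by_contra hfx
    have hxc : x ∈ GLS.cube0 n 1 := by
      by_contra hxc
      exact hfx (GLS.fdens_eq_zero hxc)
    apply hx
    rw [Metric.mem_closedBall, dist_eq_norm, sub_zero, EuclideanSpace.norm_eq]
    have hbound : ∑ i, ‖x i‖^2 ≤ (n:ℝ) := by
      calc ∑ i, ‖x i‖^2 ≤ ∑ _i : Fin n, (1:ℝ) := by
            apply Finset.sum_le_sum
            intro i _
            have h := hxc i
            rw [Real.norm_eq_abs, abs_of_nonneg h.1]
            nlinarith [h.1, h.2]
        _ = (n:ℝ) := by simp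
    calc √(∑ i, ‖x i‖^2) ≤ √(n:ℝ) := Real.sqrt_le_sqrt hbound
      _ ≤ (n:ℝ) := by
          have h1 : √(n:ℝ) ≤ √((n:ℝ)*(n:ℝ)) := Real.sqrt_le_sqrt (by nlinarith)
          rwa [Real.sqrt_mul_self hnpos.le] at h1
  · -- main inequality
    calc ENNReal.ofReal (c₁ * Real.exp (-c₂/ε))
          * volume {x | ENNReal.ofReal 1 < Tdyadic n α 1 μ x}
        ≤ ENNReal.ofReal (c₁ * Real.exp (-c₂/ε)) * (ENNReal.ofReal (2*(2:ℝ)^m) ^ n) := by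
          apply mul_le_mul_right
          rw [← GLS.volume_bigCube n m]
          exact measure_mono houter
      _ = ENNReal.ofReal (c₁ * Real.exp (-c₂/ε) * Vb) := by
          rw [← ENNReal.ofReal_pow (by positivity), ← ENNReal.ofReal_mul (by positivity),
            hVb_def]
      _ ≤ ENNReal.ofReal (((2:ℝ)^(-(K:ℤ)))^n) := ENNReal.ofReal_le_ofReal keyreal
      _ = volume (GLS.cube0 n ((2:ℝ)^(-(K:ℤ)))) := hvolCK.symm
      _ ≤ volume {x | ENNReal.ofReal 2 < Tdyadic n α 1 μ x
            ∧ Mdyadic n α μ x ≤ ENNReal.ofReal ε} := measure_mono hsubgood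
  · -- positivity
    calc (0:ℝ≥0∞) < ENNReal.ofReal (((2:ℝ)^(-(K:ℤ)))^n) := by
          rw [ENNReal.ofReal_pos]; positivity
      _ = volume (GLS.cube0 n ((2:ℝ)^(-(K:ℤ)))) := hvolCK.symm
      _ ≤ volume {x | ENNReal.ofReal 1 < Tdyadic n α 1 μ x} := measure_mono hsub1
  · -- finiteness
    calc volume {x | ENNReal.ofReal 1 < Tdyadic n α 1 μ x}
        ≤ volume (GLS.bigCube n m) := measure_mono houter
      _ = ENNReal.ofReal (2*(2:ℝ)^m) ^ n := GLS.volume_bigCube n m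
      _ < ⊤ := pow_lt_top ofReal_lt_top

end
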